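/- Let (S_j)_{j=1}^m be a partition of {1,…,p} and define P^{GL} ∈ R^{p×p} by P^{GL}_{ij} = 1/√|S_k| if i and j both lie in the same block S_k, and 0 otherwise. Then for all w ∈ R^p, ‖P^{GL}·Diag(w)‖_* = Σ_j ‖w_{S_j}‖_2, the group Lasso penalty. -/

import Mathlib

noncomputable def traceNorm {n p : ℕ} (M : Matrix (Fin n) (Fin p) ℝ) : ℝ :=
  ((((Matrix.posSemidef_conjTranspose_mul_self M).1.eigenvectorUnitary : Matrix (Fin p) (Fin p) ℝ) *
    Matrix.diagonal ((RCLike.ofReal : ℝ → ℝ) ∘ (Real.sqrt ·) ∘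
      (Matrix.posSemidef_conjTranspose_mul_self M).1.eigenvalues) *
    (star (Matrix.posSemidef_conjTranspose_mul_self M).1.eigenvectorUnitary :
      Matrix (Fin p) (Fin p) ℝ))).trace

open Matrix

theorem trace_lasso_group_lasso {p m : ℕ} (g : Fin p → Fin m) (hg : Function.Surjective g)
    (w : Fin p → ℝ) :
    traceNorm
      ((Matrix.of fun i j : Fin p =>
          if g i = g j then
            1 / Real.sqrt ((Finset.univ.filter fun l => g l = g i).card) else 0) *
        Matrix.diagonal w) =
      ∑ k : Fin m, Real.sqrt (∑ i ∈ Finset.univ.filter fun l => g l = k, w i ^ 2) := by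
  classical
  set M : Matrix (Fin p) (Fin p) ℝ :=
    (Matrix.of fun i j : Fin p =>
        if g i = g j then
          1 / Real.sqrt ((Finset.univ.filter fun l => g l = g i).card) else 0) *
      Matrix.diagonal w with hMdef
  set q : Fin m → ℝ := fun k => ∑ i ∈ Finset.univ.filter fun l => g l = k, w i ^ 2 with hq
  have hq0 : ∀ k, 0 ≤ q k := fun k => Finset.sum_nonneg fun i _ => sq_nonneg _
  have hwz : ∀ i, q (g i) = 0 → w i = 0 := by
    intro i h
    have := (Finset.sum_eq_zero_iff_of_nonneg (fun j _ => sq_nonneg (w j))).1 h i (by simp)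
    exact pow_eq_zero_iff (two_ne_zero) |>.1 this
  set n : Fin m → ℝ := fun k => Real.sqrt (q k) with hn
  have hnn : ∀ k, n k * n k = q k := fun k => Real.mul_self_sqrt (hq0 k)
  have hdiv : ∀ k, q k / n k = n k := fun k => Real.div_sqrt
  set c : Fin m → ℝ := fun k => ((Finset.univ.filter fun l => g l = k).card : ℝ) with hcdef
  have hc : ∀ k, 0 < c k := by
    intro k
    obtain ⟨i, hi⟩ := hg k
    have : 0 < (Finset.univ.filter fun l => g l = k).card :=
      Finset.card_pos.2 ⟨i, by simp [hi]⟩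
    exact Nat.cast_pos.mpr this
  set S : Matrix (Fin p) (Fin p) ℝ :=
    Matrix.of fun i j => if g i = g j then w i * w j / n (g i) else 0 with hSdef
  set A : Matrix (Fin m) (Fin p) ℝ :=
    Matrix.of fun k i => if g i = k then w i / Real.sqrt (n k) else 0 with hAdef
  have hrr : ∀ k, Real.sqrt (n k) * Real.sqrt (n k) = n k :=
    fun k => Real.mul_self_sqrt (Real.sqrt_nonneg _)
  -- S = Aᴴ * A, hence PSD
  have hSA : S = Aᴴ * A := by
    ext i j
    simp only [hSdef, hAdef, Matrix.mul_apply, Matrix.conjTranspose_apply, Matrix.of_apply,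
      star_trivial]
    by_cases h : g i = g j
    · rw [if_pos h,
        Finset.sum_eq_single_of_mem (g i) (Finset.mem_univ _)
          (fun k _ hk => by rw [if_neg (fun hh => hk hh.symm), zero_mul]),
        if_pos rfl, if_pos h.symm,
        show w i / Real.sqrt (n (g i)) * (w j / Real.sqrt (n (g i))) =
          w i * w j / (Real.sqrt (n (g i)) * Real.sqrt (n (g i))) from by ring, hrr]
    · rw [if_neg h]
      refine (Finset.sum_eq_zero fun k _ => ?_).symm
      by_cases h1 : g i = k
      · rw [if_neg (fun h2 : g j = k => h (h1.trans h2.symm)), mul_zero]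
      · rw [if_neg h1, zero_mul]
  have hS_psd : S.PosSemidef := hSA ▸ Matrix.posSemidef_conjTranspose_mul_self A
  -- entries of M
  have hMe : ∀ l i, M l i = (if g l = g i then 1 / Real.sqrt (c (g l)) else 0) * w i := by
    intro l i
    rw [hMdef, Matrix.mul_diagonal]
    rfl
  -- Mᴴ * M has entries (if g i = g j then w i * w j else 0)
  have hM : Mᴴ * M = Matrix.of fun i j => if g i = g j then w i * w j else 0 := by
    ext i j
    rw [Matrix.mul_apply]
    simp only [Matrix.conjTranspose_apply, star_trivial, hMe, Matrix.of_apply]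
    by_cases h : g i = g j
    · rw [if_pos h]
      have hterm : ∀ l, (if g l = g i then 1 / Real.sqrt (c (g l)) else 0) * w i *
          ((if g l = g j then 1 / Real.sqrt (c (g l)) else 0) * w j) =
          if g l = g i then w i * w j / c (g i) else 0 := by
        intro l
        by_cases hl : g l = g i
        · rw [if_pos hl, if_pos hl, if_pos (hl.trans h), hl,
            show 1 / Real.sqrt (c (g i)) * w i * (1 / Real.sqrt (c (g i)) * w j) =
              w i * w j / (Real.sqrt (c (g i)) * Real.sqrt (c (g i))) from by ring,
            Real.mul_self_sqrt (hc (g i)).le]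
        · simp [hl]
      rw [Finset.sum_congr rfl fun l _ => hterm l, ← Finset.sum_filter,
        Finset.sum_const, nsmul_eq_mul]
      rw [show ((Finset.univ.filter fun l => g l = g i).card : ℝ) = c (g i) from rfl,
        mul_div_cancel₀ _ (hc (g i)).ne']
    · rw [if_neg h]
      refine Finset.sum_eq_zero fun l _ => ?_
      by_cases h1 : g l = g i
      · rw [if_neg (fun h2 : g l = g j => h (h1.symm.trans h2))]
        simp
      · rw [if_neg h1]
        simp
  -- S * S = Mᴴ * M
  have hSS : S * S = Mᴴ * M := by
    rw [hM]
    ext i j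
    simp only [hSdef, Matrix.mul_apply, Matrix.of_apply]
    by_cases h : g i = g j
    · rw [if_pos h]
      have hterm : ∀ l, (if g i = g l then w i * w l / n (g i) else 0) *
          (if g l = g j then w l * w j / n (g l) else 0) =
          if g l = g i then (w i * w j / q (g i)) * w l ^ 2 else 0 := by
        intro l
        by_cases hl : g l = g i
        · rw [if_pos hl, if_pos hl.symm, if_pos (hl.trans h), hl,
            show w i * w l / n (g i) * (w l * w j / n (g i)) =
              (w i * w j * (w l * w l)) / (n (g i) * n (g i)) from by ring, hnn]
          ring
        · rw [if_neg (fun hh : g i = g l => hl hh.symm), zero_mul, if_neg hl]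
      rw [Finset.sum_congr rfl fun l _ => hterm l, ← Finset.sum_filter,
        ← Finset.mul_sum]
      by_cases hq' : q (g i) = 0
      · rw [hwz i hq']
        simp
      · rw [show (∑ l ∈ Finset.univ.filter fun l => g l = g i, w l ^ 2) = q (g i) from rfl,
          div_mul_cancel₀ _ hq']
    · rw [if_neg h]
      refine Finset.sum_eq_zero fun l _ => ?_
      by_cases h1 : g i = g l
      · rw [if_neg (fun h2 : g l = g j => h (h1.trans h2)), mul_zero]
      · rw [if_neg h1, zero_mul]
  -- conclude sqrt = S
  have hsqrt : traceNorm M = S.trace := by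
    open scoped MatrixOrder in
    have hA := Matrix.posSemidef_conjTranspose_mul_self M
    have h1 : CFC.sqrt (Mᴴ * M) = S := CFC.sqrt_unique hSS hS_psd.nonneg
    rw [CFC.sqrt_eq_cfc, cfc_nnreal_eq_real _ _ hA.nonneg, hA.1.cfc_eq] at h1
    rw [← h1, traceNorm, IsHermitian.cfc, Unitary.conjStarAlgAut_apply]
    simp only [Real.sqrt]
  rw [hsqrt]
  -- compute trace
  have htr : S.trace = ∑ i, w i * w i / n (g i) := by
    simp only [Matrix.trace, Matrix.diag, hSdef, Matrix.of_apply, eq_self_iff_true, if_true]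
  rw [htr]
  rw [← Finset.sum_fiberwise Finset.univ g fun i => w i * w i / n (g i)]
  refine Finset.sum_congr rfl fun k _ => ?_
  have : ∀ i ∈ Finset.univ.filter fun l => g l = k, w i * w i / n (g i) = w i ^ 2 / n k := by
    intro i hi
    rw [Finset.mem_filter] at hi
    rw [hi.2, sq]
  rw [Finset.sum_congr rfl this, ← Finset.sum_div,
    show (∑ i ∈ Finset.univ.filter fun l => g l = k, w i ^ 2) = q k from rfl, hdiv]
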